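/- Decomposition of the q-exponential into q-Bessel functions of order ±1/2: for every real u with 0 < u < 1/(1−q), the complex series e_q(iu) = ∑_{j=0}^∞ (iu)^j/[j]_q! converges and e_q(iu) = Γ_{q²}(1/2) · (u/(1+q))^{1/2} · ( J^{(1)}_{−1/2}(u|q²) + i · J^{(1)}_{1/2}(u|q²) ). -/

import Mathlib

open scoped BigOperators

noncomputable section

/-- The q-number `[u]_q = (q^u - 1)/(q - 1)`. -/
def qNum (q u : ℝ) : ℝ := (q ^ u - 1) / (q - 1)

/-- The q-factorial `[n]_q! = ∏_{i=1}^n [i]_q`. -/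
def qFact (q : ℝ) (n : ℕ) : ℝ := ∏ i ∈ Finset.range n, qNum q ((i : ℝ) + 1)

/-- The q-Gamma function `Γ_q(t) = (1-q)^{1-t} ∏_{k=0}^∞ (1-q^{k+1})/(1-q^{k+t})`. -/
def qGamma (q t : ℝ) : ℝ :=
  (1 - q) ^ (1 - t) * ∏' k : ℕ, (1 - q ^ (k + 1)) / (1 - q ^ ((k : ℝ) + t))

/-- The q-derivative `∂^q_t f(t) = (f(qt) - f(t))/((q-1)t)`.
The `q⁻¹`-derivative is `qDeriv q⁻¹`. -/
def qDeriv (q : ℝ) (f : ℝ → ℝ) (t : ℝ) : ℝ := (f (q * t) - f t) / ((q - 1) * t)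

/-- The q-Pochhammer symbol `(a; q)_k = ∏_{l=0}^{k-1} (1 - a q^l)`. -/
def qPoch (a q : ℝ) (k : ℕ) : ℝ := ∏ l ∈ Finset.range k, (1 - a * q ^ l)

/-- The q-exponential `E_q(t) = ∑_{j=0}^∞ q^{j(j-1)/2} t^j/[j]_q!`. -/
def qExpE (q t : ℝ) : ℝ := ∑' j : ℕ, q ^ (j * (j - 1) / 2) * t ^ j / qFact q j

/-- `e_q(-u) := 1/E_q(u)` (intended for `u ≥ 0`); `qExpe q u` denotes `e_q(-u)`. -/
def qExpe (q u : ℝ) : ℝ := (qExpE q u)⁻¹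

/-- The first q-Bessel function `J^{(1)}_ν(x|q²)`. -/
def qBessel1 (q ν x : ℝ) : ℝ :=
  (x / (1 + q)) ^ ν *
    ∑' i : ℕ, (-1 : ℝ) ^ i / (qFact (q ^ 2) i * qGamma (q ^ 2) ((i : ℝ) + ν + 1)) *
      (x / (1 + q)) ^ (2 * i)

/-- The second q-Bessel function `J^{(2)}_ν(x|q²)`. -/
def qBessel2 (q ν x : ℝ) : ℝ :=
  q ^ (ν ^ 2) * (x / (1 + q)) ^ ν *
    ∑' i : ℕ, q ^ (2 * (i : ℝ) * ((i : ℝ) + ν)) * (-1 : ℝ) ^ i /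
        (qFact (q ^ 2) i * qGamma (q ^ 2) ((i : ℝ) + ν + 1)) *
      (x / (1 + q)) ^ (2 * i)

/-- The q-Laguerre polynomial `𝓛^{(α)}_j(u|q²)`. -/
def qLaguerre (q α : ℝ) (j : ℕ) (u : ℝ) : ℝ :=
  ∑ i ∈ Finset.range (j + 1),
    q ^ ((j - i) * (j - i + 1)) * (-u) ^ i / (qFact (q ^ 2) (j - i) * qFact (q ^ 2) i) *
      (qPoch (q ^ (2 * (i : ℝ) + 2 * α + 2)) (q ^ 2) (j - i) / (1 - q ^ 2) ^ (j - i))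

/-- The q-Laguerre polynomial `𝓛^{(α)}_j(u|q^{-2})`. -/
def qLaguerreInv (q α : ℝ) (j : ℕ) (u : ℝ) : ℝ :=
  q ^ (-(j : ℝ) * ((j : ℝ) + 1 + 2 * α)) *
    ∑ i ∈ Finset.range (j + 1),
      q ^ (2 * (i : ℝ) * ((i : ℝ) + α)) * (-u) ^ i / (qFact (q ^ 2) (j - i) * qFact (q ^ 2) i) *
        (qPoch (q ^ (2 * (i : ℝ) + 2 * α + 2)) (q ^ 2) (j - i) / (1 - q ^ 2) ^ (j - i))

/-- The finite Jackson q-integral `∫_0^a f(t) d_q t = (1-q) a ∑_{k=0}^∞ f(q^k a) q^k`. -/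
def jackson (q a : ℝ) (f : ℝ → ℝ) : ℝ := (1 - q) * a * ∑' k : ℕ, f (q ^ k * a) * q ^ k

/-- The infinite Jackson q-integral `∫_0^{γ·∞} f(t) d_q t = (1-q) γ ∑_{k=-∞}^∞ f(q^k γ) q^k`. -/
def jacksonInf (q γ : ℝ) (f : ℝ → ℝ) : ℝ := (1 - q) * γ * ∑' k : ℤ, f (q ^ k * γ) * q ^ k

/-- The first q-Hankel transform `𝓗̄^{q,β}_ν`. -/
def hankel1 (q μ ν β : ℝ) (f : ℝ → ℝ) (t : ℝ) : ℝ :=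
  (1 + q) / μ * jackson q (Real.sqrt (μ / ((1 - q ^ 2) * β)))
    (fun r => qBessel1 q ν ((1 + q) / μ * (r * t)) / (r * t) ^ ν * r ^ (2 * ν + 1) * f r)

/-- The second q-Hankel transform `𝓗^{q,γ}_ν`. -/
def hankel2 (q μ ν γ : ℝ) (f : ℝ → ℝ) (r : ℝ) : ℝ :=
  (1 + q) / μ * jacksonInf q γ
    (fun t => qBessel2 q ν (q * ((1 + q) / μ) * (r * t)) / (r * t) ^ ν * t ^ (2 * ν + 1) * f t)

section AuxQBessel
open Real

variable {q : ℝ} (hq0 : 0 < q) (hq1 : q < 1)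

/-- sum of logs -/
def Lam (q t : ℝ) : ℝ := ∑' k : ℕ, Real.log (1 - q ^ ((k : ℝ) + t))

lemma rpow_lt_one' (hq0 : 0 < q) (hq1 : q < 1) {t : ℝ} (ht : 0 < t) : q ^ t < 1 :=
  Real.rpow_lt_one hq0.le hq1 ht

lemma one_sub_rpow_pos (hq0 : 0 < q) (hq1 : q < 1) {t : ℝ} (ht : 0 < t) : 0 < 1 - q ^ t :=
  sub_pos.mpr (rpow_lt_one' hq0 hq1 ht)

lemma summable_log (hq0 : 0 < q) (hq1 : q < 1) {t : ℝ} (ht : 0 < t) :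
    Summable (fun k : ℕ => Real.log (1 - q ^ ((k : ℝ) + t))) := by
  have hqt : 0 < 1 - q ^ t := one_sub_rpow_pos hq0 hq1 ht
  apply Summable.of_norm_bounded (g := fun k : ℕ => (q ^ t / (1 - q ^ t)) * q ^ k)
  · exact (summable_geometric_of_lt_one hq0.le hq1).mul_left _
  · intro k
    have hkt : (0:ℝ) < (k : ℝ) + t := by positivity
    have h1 : 0 < 1 - q ^ ((k:ℝ) + t) := one_sub_rpow_pos hq0 hq1 hkt
    have hle : q ^ ((k:ℝ) + t) ≤ q ^ t := by
      calc q ^ ((k:ℝ) + t) = q ^ (k:ℝ) * q ^ t := Real.rpow_add hq0 _ _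
      _ ≤ 1 * q ^ t := by
          have : q ^ (k:ℝ) ≤ 1 := Real.rpow_le_one hq0.le hq1.le (by positivity)
          nlinarith [Real.rpow_pos_of_pos hq0 t]
      _ = q ^ t := one_mul _
    have hbd : q ^ ((k:ℝ)+t) / (1 - q ^ ((k:ℝ)+t)) ≤ (q ^ t / (1 - q ^ t)) * q ^ k := by
      have e1 : q ^ ((k:ℝ)+t) = q ^ k * q ^ t := by
        rw [Real.rpow_add hq0, Real.rpow_natCast]
      have step : q ^ ((k:ℝ)+t) / (1 - q ^ ((k:ℝ)+t)) ≤ q ^ ((k:ℝ)+t) / (1 - q ^ t) :=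
        div_le_div_of_nonneg_left (by positivity) hqt (by linarith)
      refine step.trans ?_
      rw [e1]; ring_nf; rfl
    have hlog : -Real.log (1 - q ^ ((k:ℝ) + t)) ≤ q ^ ((k:ℝ)+t) / (1 - q ^ ((k:ℝ)+t)) := by
      have h2 : Real.log (1 - q ^ ((k:ℝ)+t))⁻¹ ≤ (1 - q ^ ((k:ℝ)+t))⁻¹ - 1 :=
        Real.log_le_sub_one_of_pos (by positivity)
      rw [Real.log_inv] at h2
      have e : (1 - q ^ ((k:ℝ)+t))⁻¹ - 1 = q ^ ((k:ℝ)+t) / (1 - q ^ ((k:ℝ)+t)) := by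
        field_simp
        ring
      linarith [e ▸ h2]
    have hnn : Real.log (1 - q ^ ((k:ℝ)+t)) ≤ 0 :=
      Real.log_nonpos (by linarith) (by nlinarith [Real.rpow_pos_of_pos hq0 ((k:ℝ)+t)])
    rw [Real.norm_eq_abs, abs_of_nonpos hnn]
    exact hlog.trans hbd

lemma qGamma_eq (hq0 : 0 < q) (hq1 : q < 1) {t : ℝ} (ht : 0 < t) :
    qGamma q t = (1 - q) ^ (1 - t) * Real.exp (Lam q 1 - Lam q t) := by
  have hs1 := summable_log hq0 hq1 (t := 1) one_pos
  have hst := summable_log hq0 hq1 ht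
  have hsum : HasSum (fun k : ℕ => Real.log (1 - q ^ ((k:ℝ) + 1)) - Real.log (1 - q ^ ((k:ℝ) + t)))
      (Lam q 1 - Lam q t) := hs1.hasSum.sub hst.hasSum
  have hprod := hsum.rexp
  have heq : (fun k : ℕ => Real.exp (Real.log (1 - q ^ ((k:ℝ) + 1)) - Real.log (1 - q ^ ((k:ℝ) + t))))
      = fun k : ℕ => (1 - q ^ (k + 1)) / (1 - q ^ ((k : ℝ) + t)) := by
    funext k
    have h1 : (0:ℝ) < 1 - q ^ ((k:ℝ) + 1) := one_sub_rpow_pos hq0 hq1 (by positivity)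
    have h2 : (0:ℝ) < 1 - q ^ ((k:ℝ) + t) := one_sub_rpow_pos hq0 hq1 (by positivity)
    rw [Real.exp_sub, Real.exp_log h1, Real.exp_log h2]
    congr 2
    rw [← Real.rpow_natCast q (k+1)]
    push_cast
    ring_nf
  rw [Function.comp_def, heq] at hprod
  rw [qGamma, hprod.tprod_eq]

lemma qGamma_pos (hq0 : 0 < q) (hq1 : q < 1) {t : ℝ} (ht : 0 < t) : 0 < qGamma q t := by
  rw [qGamma_eq hq0 hq1 ht]
  have : (0:ℝ) < 1 - q := by linarith
  positivity

lemma Lam_succ (hq0 : 0 < q) (hq1 : q < 1) {t : ℝ} (ht : 0 < t) :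
    Lam q t = Real.log (1 - q ^ t) + Lam q (t + 1) := by
  have hst := summable_log hq0 hq1 ht
  rw [Lam, Summable.tsum_eq_zero_add hst]
  congr 1
  · norm_num
  · rw [Lam]
    apply tsum_congr
    intro k
    congr 2
    push_cast
    ring

lemma qGamma_succ (hq0 : 0 < q) (hq1 : q < 1) {t : ℝ} (ht : 0 < t) :
    qGamma q (t + 1) = qNum q t * qGamma q t := by
  have hqt : 0 < 1 - q ^ t := one_sub_rpow_pos hq0 hq1 ht
  have h1q : (0:ℝ) < 1 - q := by linarith
  rw [qGamma_eq hq0 hq1 (by linarith : (0:ℝ) < t + 1), qGamma_eq hq0 hq1 ht,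
    Lam_succ hq0 hq1 ht]
  have e1 : (1 - (t+1)) = (1 - t) - 1 := by ring
  rw [e1, Real.rpow_sub h1q, Real.rpow_one]
  rw [show Lam q 1 - (Real.log (1 - q ^ t) + Lam q (t+1))
      = (Lam q 1 - Lam q (t+1)) - Real.log (1 - q ^ t) by ring,
    qNum]
  simp only [Real.exp_sub, Real.exp_log hqt]
  have hq1' : q - 1 ≠ 0 := by linarith
  field_simp
  ring


lemma qNum_eq (q t : ℝ) : qNum q t = (1 - q ^ t) / (1 - q) := by
  rw [qNum, show q ^ t - 1 = -(1 - q ^ t) by ring, show q - 1 = -(1 - q) by ring,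
    neg_div_neg_eq]

lemma qNum_nat (q : ℝ) (n : ℕ) : qNum q ((n : ℝ)) = (1 - q ^ n) / (1 - q) := by
  rw [qNum_eq, Real.rpow_natCast]

lemma qNum_pos (hq0 : 0 < q) (hq1 : q < 1) {t : ℝ} (ht : 0 < t) : 0 < qNum q t := by
  rw [qNum_eq]
  exact div_pos (one_sub_rpow_pos hq0 hq1 ht) (by linarith)

lemma qFact_pos (hq0 : 0 < q) (hq1 : q < 1) (n : ℕ) : 0 < qFact q n := by
  apply Finset.prod_pos
  intro i _
  exact qNum_pos hq0 hq1 (by positivity)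

lemma qFact_succ (q : ℝ) (n : ℕ) : qFact q (n + 1) = qFact q n * qNum q ((n : ℝ) + 1) :=
  Finset.prod_range_succ _ _

lemma qGamma_add_nat (hq0 : 0 < q) (hq1 : q < 1) (i : ℕ) {t : ℝ} (ht : 0 < t) :
    qGamma q ((i : ℝ) + t) = (∏ k ∈ Finset.range i, qNum q ((k : ℝ) + t)) * qGamma q t := by
  induction i with
  | zero => simp
  | succ n ih =>
    have e : ((n + 1 : ℕ) : ℝ) + t = ((n : ℝ) + t) + 1 := by push_cast; ring
    rw [e, qGamma_succ hq0 hq1 (by positivity), ih, Finset.prod_range_succ]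
    ring

section keys
variable (hq0 : 0 < q) (hq1 : q < 1)

lemma qNum_sq_half (hq0 : 0 < q) (hq1 : q < 1) (i : ℕ) :
    qNum (q ^ 2) ((i : ℝ) + 1 / 2) = (1 - q ^ (2 * i + 1)) / (1 - q ^ 2) := by
  rw [qNum_eq]
  congr 2
  rw [← Real.rpow_natCast q 2, ← Real.rpow_mul hq0.le, ← Real.rpow_natCast q (2 * i + 1)]
  congr 1
  push_cast
  ring

lemma qNum_sq_nat (hq0 : 0 < q) (i : ℕ) :
    qNum (q ^ 2) ((i : ℝ) + 1) = (1 - q ^ (2 * i + 2)) / (1 - q ^ 2) := by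
  rw [show ((i:ℝ) + 1) = ((i + 1 : ℕ) : ℝ) by push_cast; ring, qNum_nat]
  congr 2
  rw [← pow_mul]
  congr 1

lemma key_even (hq0 : 0 < q) (hq1 : q < 1) (i : ℕ) :
    qFact q (2 * i) * qGamma (q ^ 2) ((1 : ℝ) / 2) =
      qFact (q ^ 2) i * (1 + q) ^ (2 * i) * qGamma (q ^ 2) ((i : ℝ) + 1 / 2) := by
  have hQ0 : 0 < q ^ 2 := by positivity
  have hQ1 : q ^ 2 < 1 := by nlinarith
  induction i with
  | zero => norm_num [qFact]
  | succ n ih =>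
    have e1 : 2 * (n + 1) = (2 * n + 1) + 1 := by ring
    have e2 : ((n + 1 : ℕ) : ℝ) + 1 / 2 = ((n : ℝ) + 1 / 2) + 1 := by push_cast; ring
    rw [e1, qFact_succ, qFact_succ, e2, qGamma_succ hQ0 hQ1 (by positivity),
      qFact_succ]
    have r1 : qNum q (((2 * n : ℕ) : ℝ) + 1) = (1 - q ^ (2 * n + 1)) / (1 - q) := by
      rw [show ((2 * n : ℕ) : ℝ) + 1 = ((2 * n + 1 : ℕ) : ℝ) by push_cast; ring, qNum_nat]
    have r2 : qNum q (((2 * n + 1 : ℕ) : ℝ) + 1) = (1 - q ^ (2 * n + 2)) / (1 - q) := by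
      rw [show ((2 * n + 1 : ℕ) : ℝ) + 1 = ((2 * n + 2 : ℕ) : ℝ) by push_cast; ring, qNum_nat]
    rw [r1, r2, qNum_sq_half hq0 hq1, qNum_sq_nat hq0]
    have h1 : (1 : ℝ) - q ≠ 0 := by linarith
    have h2 : (1 : ℝ) - q ^ 2 ≠ 0 := by nlinarith
    have p1 : q ^ (2 * n + 1) = q ^ (2 * n) * q := by rw [pow_succ]
    have p2 : q ^ (2 * n + 2) = q ^ (2 * n) * q * q := by
      rw [show 2 * n + 2 = (2 * n + 1) + 1 by ring, pow_succ, p1]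
    have p3 : (1 + q) ^ (2 * n + 1 + 1) = (1 + q) ^ (2 * n) * (1 + q) * (1 + q) := by
      rw [pow_succ, pow_succ]
    have hne : qFact (q ^ 2) n * (1 + q) ^ (2 * n) ≠ 0 := by
      have := qFact_pos hQ0 hQ1 n
      positivity
    have hGn : qGamma (q ^ 2) ((n : ℝ) + 1 / 2) =
        qFact q (2 * n) * qGamma (q ^ 2) ((1:ℝ) / 2) / (qFact (q ^ 2) n * (1 + q) ^ (2 * n)) := by
      rw [eq_div_iff hne]; linarith [ih]
    rw [p1, p2, p3, hGn]
    have hf := (qFact_pos hQ0 hQ1 n).ne'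
    have hp : ((1:ℝ) + q) ^ (2 * n) ≠ 0 := by positivity
    field_simp
    ring

end keys

lemma key_odd (hq0 : 0 < q) (hq1 : q < 1) (i : ℕ) :
    qFact q (2 * i + 1) * qGamma (q ^ 2) ((1 : ℝ) / 2) =
      qFact (q ^ 2) i * (1 + q) ^ (2 * i + 1) * qGamma (q ^ 2) ((i : ℝ) + 3 / 2) := by
  have hQ0 : 0 < q ^ 2 := by positivity
  have hQ1 : q ^ 2 < 1 := by nlinarith
  have e2 : ((i : ℝ) + 3 / 2) = ((i : ℝ) + 1 / 2) + 1 := by ring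
  rw [qFact_succ, e2, qGamma_succ hQ0 hQ1 (by positivity),
    show ((1:ℝ) + q) ^ (2 * i + 1) = (1 + q) ^ (2 * i) * (1 + q) from pow_succ _ _]
  have r1 : qNum q (((2 * i : ℕ) : ℝ) + 1) = (1 - q ^ (2 * i + 1)) / (1 - q) := by
    rw [show ((2 * i : ℕ) : ℝ) + 1 = ((2 * i + 1 : ℕ) : ℝ) by push_cast; ring, qNum_nat]
  rw [r1, qNum_sq_half hq0 hq1]
  have h1 : (1 : ℝ) - q ≠ 0 := by linarith
  have h2 : (1 : ℝ) - q ^ 2 ≠ 0 := by nlinarith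
  have key := key_even hq0 hq1 i
  have hne : qFact (q ^ 2) i * (1 + q) ^ (2 * i) ≠ 0 := by
    have := qFact_pos hQ0 hQ1 i
    positivity
  have hGn : qGamma (q ^ 2) ((i : ℝ) + 1 / 2) =
      qFact q (2 * i) * qGamma (q ^ 2) ((1:ℝ) / 2) / (qFact (q ^ 2) i * (1 + q) ^ (2 * i)) := by
    rw [eq_div_iff hne]; linarith [key]
  rw [hGn]
  have hf := (qFact_pos hQ0 hQ1 i).ne'
  have hp : ((1:ℝ) + q) ^ (2 * i) ≠ 0 := by positivity
  field_simp
  ring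

lemma summable_ratio (hq0 : 0 < q) (hq1 : q < 1) {u : ℝ} (hu0 : 0 < u)
    (hu1 : u < 1 / (1 - q)) : Summable (fun j : ℕ => u ^ j / qFact q j) := by
  have h1q : (0:ℝ) < 1 - q := by linarith
  apply summable_of_ratio_test_tendsto_lt_one (l := u * (1 - q))
  · rw [lt_div_iff₀ h1q] at hu1; linarith
  · filter_upwards with n
    exact (div_pos (pow_pos hu0 n) (qFact_pos hq0 hq1 n)).ne'
  · have t0 : Filter.Tendsto (fun j : ℕ => (q:ℝ) ^ (j+1)) Filter.atTop (nhds 0) := by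
      exact (tendsto_pow_atTop_nhds_zero_of_lt_one hq0.le hq1).comp
        (Filter.tendsto_add_atTop_nat 1)
    have t1 : Filter.Tendsto (fun j : ℕ => u * (q - 1) / ((q:ℝ) ^ (j+1) - 1))
        Filter.atTop (nhds (u * (q - 1) / (0 - 1))) :=
      Filter.Tendsto.div tendsto_const_nhds (t0.sub_const 1) (by norm_num)
    have e : (u * (q - 1) / (0 - 1)) = u * (1 - q) := by ring
    rw [e] at t1
    apply t1.congr
    intro j
    have hfj := qFact_pos hq0 hq1 j
    have hnum : qNum q ((j:ℝ) + 1) = (1 - q ^ (j+1)) / (1 - q) := by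
      rw [show ((j:ℝ) + 1) = ((j + 1 : ℕ) : ℝ) by push_cast; ring, qNum_nat]
    have hqj : (0:ℝ) < 1 - q ^ (j+1) := by
      have : q ^ (j+1) < 1 := pow_lt_one₀ hq0.le hq1 (Nat.succ_ne_zero j)
      linarith
    rw [Real.norm_eq_abs, Real.norm_eq_abs,
      abs_of_pos (div_pos (pow_pos hu0 _) (qFact_pos hq0 hq1 _)),
      abs_of_pos (div_pos (pow_pos hu0 _) hfj), qFact_succ, hnum]
    have h2 := hfj.ne'
    have h3 : (u:ℝ) ^ j ≠ 0 := (pow_pos hu0 j).ne'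
    have h4 : (1:ℝ) - q ^ (j+1) ≠ 0 := hqj.ne'
    have h5 : (1:ℝ) - q ≠ 0 := h1q.ne'
    have h6 : (-1 + q * q ^ j : ℝ) ≠ 0 := by
      intro hcon; apply h4; rw [pow_succ]; linarith
    rw [div_eq_div_iff (by rw [pow_succ]; intro hc; apply h6; linarith : (q:ℝ) ^ (j+1) - 1 ≠ 0)
      (by positivity : u ^ j / qFact q j ≠ 0)]
    field_simp
    ring

lemma R1 (hq0 : 0 < q) (hq1 : q < 1) {u : ℝ} (hu0 : 0 < u) :
    qGamma (q ^ 2) ((1:ℝ) / 2) * (u / (1 + q)) ^ ((1 : ℝ) / 2) * qBessel1 q (-(1 / 2)) u =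
      ∑' k : ℕ, ((-1 : ℝ) ^ k * u ^ (2 * k) / qFact q (2 * k)) := by
  have hQ0 : 0 < q ^ 2 := by positivity
  have hQ1 : q ^ 2 < 1 := by nlinarith
  have hv : 0 < u / (1 + q) := div_pos hu0 (by linarith)
  have hΓh := qGamma_pos hQ0 hQ1 (show (0:ℝ) < 1/2 by norm_num)
  rw [qBessel1]
  have hw : (u/(1+q)) ^ ((1:ℝ)/2) * (u/(1+q)) ^ (-(1/2) : ℝ) = 1 := by
    rw [← Real.rpow_add hv]; norm_num
  rw [show qGamma (q^2) ((1:ℝ)/2) * (u/(1+q)) ^ ((1:ℝ)/2) *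
      ((u / (1 + q)) ^ (-(1/2) : ℝ) *
        ∑' i : ℕ, (-1 : ℝ) ^ i / (qFact (q ^ 2) i * qGamma (q ^ 2) ((i : ℝ) + -(1/2) + 1)) *
          (u / (1 + q)) ^ (2 * i))
      = ((u/(1+q)) ^ ((1:ℝ)/2) * (u / (1 + q)) ^ (-(1/2) : ℝ)) *
        (qGamma (q^2) ((1:ℝ)/2) *
        ∑' i : ℕ, (-1 : ℝ) ^ i / (qFact (q ^ 2) i * qGamma (q ^ 2) ((i : ℝ) + -(1/2) + 1)) *
          (u / (1 + q)) ^ (2 * i)) by ring, hw, one_mul]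
  rw [mul_comm (qGamma (q^2) ((1:ℝ)/2)) _, ← tsum_mul_right]
  apply tsum_congr
  intro i
  have e : (i:ℝ) + -(1/2) + 1 = (i:ℝ) + 1/2 := by ring
  rw [e]
  have hΓi := qGamma_pos hQ0 hQ1 (show (0:ℝ) < (i:ℝ)+1/2 by positivity)
  have key := key_even hq0 hq1 i
  have hFQ := qFact_pos hQ0 hQ1 i
  have hF2 := qFact_pos hq0 hq1 (2*i)
  have hne : qFact (q ^ 2) i * (1 + q) ^ (2 * i) ≠ 0 := by positivity
  have hGi : qGamma (q^2) ((i:ℝ)+1/2) =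
      qFact q (2*i) * qGamma (q^2) ((1:ℝ)/2) / (qFact (q^2) i * (1+q)^(2*i)) := by
    rw [eq_div_iff hne]; linarith [key]
  rw [hGi, div_pow]
  have h1 : ((1:ℝ)+q) ^ (2*i) ≠ 0 := by positivity
  field_simp

lemma R2 (hq0 : 0 < q) (hq1 : q < 1) {u : ℝ} (hu0 : 0 < u) :
    qGamma (q ^ 2) ((1:ℝ) / 2) * (u / (1 + q)) ^ ((1 : ℝ) / 2) * qBessel1 q (1 / 2) u =
      ∑' k : ℕ, ((-1 : ℝ) ^ k * u ^ (2 * k + 1) / qFact q (2 * k + 1)) := by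
  have hQ0 : 0 < q ^ 2 := by positivity
  have hQ1 : q ^ 2 < 1 := by nlinarith
  have hv : 0 < u / (1 + q) := div_pos hu0 (by linarith)
  have hΓh := qGamma_pos hQ0 hQ1 (show (0:ℝ) < 1/2 by norm_num)
  rw [qBessel1]
  have hw : (u/(1+q)) ^ ((1:ℝ)/2) * (u/(1+q)) ^ ((1/2) : ℝ) = u/(1+q) := by
    rw [← Real.rpow_add hv]; norm_num
  rw [show qGamma (q^2) ((1:ℝ)/2) * (u/(1+q)) ^ ((1:ℝ)/2) *
      ((u / (1 + q)) ^ ((1/2) : ℝ) *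
        ∑' i : ℕ, (-1 : ℝ) ^ i / (qFact (q ^ 2) i * qGamma (q ^ 2) ((i : ℝ) + 1/2 + 1)) *
          (u / (1 + q)) ^ (2 * i))
      = ((u/(1+q)) ^ ((1:ℝ)/2) * (u / (1 + q)) ^ ((1/2) : ℝ)) *
        (qGamma (q^2) ((1:ℝ)/2) *
        ∑' i : ℕ, (-1 : ℝ) ^ i / (qFact (q ^ 2) i * qGamma (q ^ 2) ((i : ℝ) + 1/2 + 1)) *
          (u / (1 + q)) ^ (2 * i)) by ring, hw]
  rw [← tsum_mul_left, ← tsum_mul_left]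
  apply tsum_congr
  intro i
  have e : (i:ℝ) + 1/2 + 1 = (i:ℝ) + 3/2 := by ring
  rw [e]
  have hΓi := qGamma_pos hQ0 hQ1 (show (0:ℝ) < (i:ℝ)+3/2 by positivity)
  have key := key_odd hq0 hq1 i
  have hFQ := qFact_pos hQ0 hQ1 i
  have hF2 := qFact_pos hq0 hq1 (2*i+1)
  have hne : qFact (q ^ 2) i * (1 + q) ^ (2 * i + 1) ≠ 0 := by positivity
  have hGi : qGamma (q^2) ((i:ℝ)+3/2) =
      qFact q (2*i+1) * qGamma (q^2) ((1:ℝ)/2) / (qFact (q^2) i * (1+q)^(2*i+1)) := by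
    rw [eq_div_iff hne]; linarith [key]
  rw [hGi, div_pow]
  have h1 : ((1:ℝ)+q) ^ (2*i) ≠ 0 := by positivity
  have h2 : ((1:ℝ)+q) ^ (2*i+1) ≠ 0 := by positivity
  have h3 : ((1:ℝ)+q) ≠ 0 := by positivity
  have hps : ((1:ℝ)+q) ^ (2*i+1) = (1+q)^(2*i) * (1+q) := pow_succ _ _
  rw [hps]
  field_simp
  ring


end AuxQBessel

/-- decomposition of the q-exponential into q-Bessel functions of order `±1/2`:
for `0 < u < 1/(1-q)`, the series `e_q(iu) = ∑_j (iu)^j/[j]_q!` converges and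
`e_q(iu) = Γ_{q²}(1/2) (u/(1+q))^{1/2} (J^{(1)}_{-1/2}(u|q²) + i J^{(1)}_{1/2}(u|q²))`. -/
theorem qExp_qBessel_decomposition (q : ℝ) (hq0 : 0 < q) (hq1 : q < 1)
    (u : ℝ) (hu0 : 0 < u) (hu1 : u < 1 / (1 - q)) :
    Summable (fun j : ℕ => (Complex.I * (u : ℂ)) ^ j / ((qFact q j : ℝ) : ℂ)) ∧
    ∑' j : ℕ, (Complex.I * (u : ℂ)) ^ j / ((qFact q j : ℝ) : ℂ) =
      ((qGamma (q ^ 2) (1 / 2) : ℝ) : ℂ) * (((u / (1 + q)) ^ ((1 : ℝ) / 2) : ℝ) : ℂ) *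
        (((qBessel1 q (-(1 / 2)) u : ℝ) : ℂ) +
          Complex.I * ((qBessel1 q (1 / 2) u : ℝ) : ℂ)) := by
  set F : ℕ → ℂ := fun j => (Complex.I * (u : ℂ)) ^ j / ((qFact q j : ℝ) : ℂ) with hFdef
  have hnorm : ∀ j, ‖F j‖ = u ^ j / qFact q j := by
    intro j
    rw [hFdef]
    simp only [norm_div, norm_pow, norm_mul, Complex.norm_I, one_mul, Complex.norm_real,
      Real.norm_eq_abs, abs_of_pos hu0, abs_of_pos (qFact_pos hq0 hq1 j)]
  have hF : Summable F := by
    apply Summable.of_norm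
    exact (summable_congr fun j => (hnorm j)).mpr (summable_ratio hq0 hq1 hu0 hu1)
  refine ⟨hF, ?_⟩
  -- even/odd split
  have heS : Summable (fun k : ℕ => F (2 * k)) :=
    hF.comp_injective (fun a b h => by omega)
  have hoS : Summable (fun k : ℕ => F (2 * k + 1)) :=
    hF.comp_injective (fun a b h => by omega)
  rw [← tsum_even_add_odd heS hoS]
  -- identify the even and odd parts
  have hpow : ∀ k : ℕ, (Complex.I * (u:ℂ)) ^ (2 * k) = (((-1:ℝ) ^ k * u ^ (2*k) : ℝ) : ℂ) := by
    intro k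
    rw [pow_mul, show (Complex.I * (u:ℂ)) ^ 2 = -((u:ℂ)^2) by
      rw [mul_pow, Complex.I_sq]; ring]
    rw [neg_pow, ← pow_mul]
    push_cast
    ring
  have heven : ∀ k : ℕ, F (2 * k) = (((-1:ℝ)^k * u^(2*k) / qFact q (2*k) : ℝ) : ℂ) := by
    intro k
    rw [hFdef]
    simp only []
    rw [hpow k]
    push_cast
    ring
  have hodd : ∀ k : ℕ, F (2 * k + 1) =
      Complex.I * (((-1:ℝ)^k * u^(2*k+1) / qFact q (2*k+1) : ℝ) : ℂ) := by
    intro k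
    rw [hFdef]
    simp only []
    rw [pow_succ, hpow k]
    push_cast
    ring
  rw [tsum_congr heven, tsum_congr hodd]
  rw [← Complex.ofReal_tsum]
  rw [tsum_mul_left, ← Complex.ofReal_tsum]
  rw [← R1 hq0 hq1 hu0, ← R2 hq0 hq1 hu0]
  push_cast
  ring
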